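/- For positive measurable f : ℝ^r → (0,∞) with N_h f well defined, ∫ (N_h f)(x) dx ≤ ∫ f(x) dx, where (N_h f)(x) = exp[∫ s̃_h(u,x) log f(u) du]. -/

import Mathlib

set_option maxHeartbeats 1000000


open MeasureTheory

/-- Evaluation at a coordinate is quasi-measure-preserving for the volume on `Fin r → ℝ`. -/
lemma eval_qmp {r : ℕ} (k : Fin r) :
    Measure.QuasiMeasurePreserving (fun u : Fin r → ℝ => u k) volume volume := by
  refine ⟨measurable_pi_apply k, Measure.AbsolutelyContinuous.mk fun t ht h0 => ?_⟩
  rw [Measure.map_apply (measurable_pi_apply k) ht]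
  exact Measure.pi_eval_preimage_null _ h0

/-- Pointwise Jensen inequality for exponential with a probability density weight. -/
lemma jensen_exp_weighted {α : Type*} [MeasurableSpace α] (μ : Measure α)
    (w : α → ℝ) (hw_nonneg : ∀ u, 0 ≤ w u) (hw_meas : AEMeasurable w μ)
    (hw_int : Integrable w μ) (hw1 : (∫ u, w u ∂μ) = 1)
    (g : α → ℝ) (hg_pos : ∀ u, 0 < g u)
    (hlog : Integrable (fun u => w u * Real.log (g u)) μ)
    (hwg : Integrable (fun u => w u * g u) μ) :
    Real.exp (∫ u, w u * Real.log (g u) ∂μ) ≤ ∫ u, w u * g u ∂μ := by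
  set W : α → NNReal := fun u => (w u).toNNReal with hW
  have hW_meas : AEMeasurable W μ :=
    measurable_real_toNNReal.comp_aemeasurable hw_meas
  have hW_coe : ∀ u, ((W u : ℝ)) = w u := fun u =>
    Real.coe_toNNReal _ (hw_nonneg u)
  set ν : Measure α := μ.withDensity (fun u => (W u : ENNReal)) with hν
  have hν_prob : IsProbabilityMeasure ν := by
    constructor
    rw [hν, withDensity_apply _ MeasurableSet.univ, setLIntegral_univ]
    have : ∀ u, ((W u : ENNReal)) = ENNReal.ofReal (w u) := fun u => by
      rw [ENNReal.ofReal]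
    simp_rw [this]
    rw [← ofReal_integral_eq_lintegral_ofReal hw_int
      (Filter.Eventually.of_forall hw_nonneg), hw1, ENNReal.ofReal_one]
  -- transfer integrals/integrability to ν
  have hint_log : ∫ u, Real.log (g u) ∂ν = ∫ u, w u * Real.log (g u) ∂μ := by
    rw [hν, integral_withDensity_eq_integral_smul₀ hW_meas]
    simp_rw [NNReal.smul_def, smul_eq_mul, hW_coe]
  have hint_g : ∫ u, g u ∂ν = ∫ u, w u * g u ∂μ := by
    rw [hν, integral_withDensity_eq_integral_smul₀ hW_meas]
    simp_rw [NNReal.smul_def, smul_eq_mul, hW_coe]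
  have hlog' : Integrable (fun u => Real.log (g u)) ν := by
    rw [hν, integrable_withDensity_iff_integrable_coe_smul₀ hW_meas]
    simpa only [smul_eq_mul, hW_coe] using hlog
  have hg' : Integrable g ν := by
    rw [hν, integrable_withDensity_iff_integrable_coe_smul₀ hW_meas]
    simpa only [smul_eq_mul, hW_coe] using hwg
  have := convexOn_exp.map_integral_le (μ := ν) (f := fun u => Real.log (g u))
    Real.continuous_exp.continuousOn isClosed_univ
    (Filter.Eventually.of_forall fun u => Set.mem_univ _) hlog' ?_
  · rw [hint_log] at this
    refine this.trans (le_of_eq ?_)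
    rw [← hint_g]
    congr 1
    ext u
    exact Real.exp_log (hg_pos u)
  · have : (Real.exp ∘ fun u => Real.log (g u)) = g := by
      ext u; exact Real.exp_log (hg_pos u)
    rw [this]
    exact hg'

/-- For positive `f` with `N_h f` well defined,
`∫ N_h f ≤ ∫ f`, where `(N_h f)(x) = exp[∫ s̃_h(u,x) log f(u) du]`. -/
theorem nonlinear_smoother_mass_inequality {r : ℕ} (s : ℝ → ℝ → ℝ)
    (hs_nonneg : ∀ v z, 0 ≤ s v z)
    (hs_int1 : ∀ v, Integrable (fun z => s v z))
    (hs_int2 : ∀ z, Integrable (fun v => s v z))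
    (hs1 : ∀ v, (∫ z, s v z) = 1)
    (hs2 : ∀ z, (∫ v, s v z) = 1)
    (f : (Fin r → ℝ) → ℝ) (hf_meas : Measurable f) (hf_pos : ∀ x, 0 < f x)
    (hf_int : Integrable f)
    (hlog_int : ∀ x : Fin r → ℝ,
      Integrable (fun u : Fin r → ℝ => (∏ k, s (u k) (x k)) * Real.log (f u)))
    (hNh_int : Integrable (fun x : Fin r → ℝ =>
      Real.exp (∫ u : Fin r → ℝ, (∏ k, s (u k) (x k)) * Real.log (f u))))
    (hprod_int : Integrable (fun p : (Fin r → ℝ) × (Fin r → ℝ) =>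
      (∏ k, s (p.1 k) (p.2 k)) * f p.1)) :
    (∫ x : Fin r → ℝ, Real.exp (∫ u : Fin r → ℝ, (∏ k, s (u k) (x k)) * Real.log (f u))) ≤
      ∫ x : Fin r → ℝ, f x := by
  have hprod_int' : Integrable (fun p : (Fin r → ℝ) × (Fin r → ℝ) =>
      (∏ k, s (p.1 k) (p.2 k)) * f p.1)
      ((volume : Measure (Fin r → ℝ)).prod volume) := hprod_int
  -- a.e. slice integrability in x
  have hslice : ∀ᵐ x : Fin r → ℝ,
      Integrable (fun u : Fin r → ℝ => (∏ k, s (u k) (x k)) * f u) :=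
    hprod_int'.prod_left_ae
  -- a.e. pointwise Jensen
  have key : ∀ᵐ x : Fin r → ℝ,
      Real.exp (∫ u : Fin r → ℝ, (∏ k, s (u k) (x k)) * Real.log (f u)) ≤
        ∫ u : Fin r → ℝ, (∏ k, s (u k) (x k)) * f u := by
    filter_upwards [hslice] with x hx
    have hw_meas : AEMeasurable (fun u : Fin r → ℝ => ∏ k, s (u k) (x k)) volume := by
      apply Finset.aemeasurable_fun_prod
      intro k _
      exact (hs_int2 (x k)).aemeasurable.comp_quasiMeasurePreserving (eval_qmp k)
    have hw_int : Integrable (fun u : Fin r → ℝ => ∏ k, s (u k) (x k)) :=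
      Integrable.fintype_prod (f := fun k v => s v (x k)) (fun k => hs_int2 (x k))
    have hw1 : (∫ u : Fin r → ℝ, ∏ k, s (u k) (x k)) = 1 := by
      rw [integral_fintype_prod_volume_eq_prod (f := fun k v => s v (x k))]
      simp [hs2]
    exact jensen_exp_weighted volume _
      (fun u => Finset.prod_nonneg fun k _ => hs_nonneg _ _) hw_meas hw_int hw1
      f hf_pos (hlog_int x) hx
  -- integrability of the RHS of the pointwise bound
  have hrhs_int : Integrable (fun x : Fin r → ℝ =>
      ∫ u : Fin r → ℝ, (∏ k, s (u k) (x k)) * f u) := by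
    exact hprod_int'.integral_prod_right
  calc (∫ x : Fin r → ℝ, Real.exp (∫ u : Fin r → ℝ, (∏ k, s (u k) (x k)) * Real.log (f u)))
      ≤ ∫ x : Fin r → ℝ, ∫ u : Fin r → ℝ, (∏ k, s (u k) (x k)) * f u :=
        integral_mono_ae hNh_int hrhs_int key
    _ = ∫ u : Fin r → ℝ, ∫ x : Fin r → ℝ, (∏ k, s (u k) (x k)) * f u := by
        exact (integral_integral_swap (f := fun (u x : Fin r → ℝ) =>
          (∏ k, s (u k) (x k)) * f u) hprod_int').symm
    _ = ∫ x : Fin r → ℝ, f x := by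
        congr 1
        ext u
        rw [integral_mul_const]
        rw [integral_fintype_prod_volume_eq_prod (f := fun k z => s (u k) z)]
        simp [hs1]
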